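/- Let $\mu$ be a finite signed Borel measure on $\mathbb{R}^2$ and $p \in (1,\infty]$. Then $\limsup_{t \to 0^+} t^{1 - 1/p} \|e^{t\Delta}\mu\|_{L^p} \le C_p \|\mu\|_{pp}$, where $\|\mu\|_{pp} = \sum_{x : |\mu(\{x\})| > 0} |\mu(\{x\})|$ is the total variation of the atomic part of $\mu$, and $C_p$ depends only on $p$. -/

import Mathlib

open MeasureTheory Real Filter
open scoped ENNReal Topology

noncomputable section

/-- The two-dimensional heat kernel. -/
def heatK (t : ℝ) (x : EuclideanSpace ℝ (Fin 2)) : ℝ :=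
  (4 * Real.pi * t)⁻¹ * Real.exp (-‖x‖ ^ 2 / (4 * t))

/-- The heat evolution of a finite signed Borel measure `μ` on `ℝ²`:
`(e^{tΔ}μ)(x) = ∫ K_t(x-y) dμ(y)`, written via the Jordan decomposition. -/
def heatEvol (μ : MeasureTheory.SignedMeasure (EuclideanSpace ℝ (Fin 2))) (t : ℝ)
    (x : EuclideanSpace ℝ (Fin 2)) : ℝ :=
  (∫ y, heatK t (x - y) ∂μ.toJordanDecomposition.posPart) -
    ∫ y, heatK t (x - y) ∂μ.toJordanDecomposition.negPart

section Aux

open Metric Set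

abbrev E2 := EuclideanSpace ℝ (Fin 2)

lemma heatK_cont (t : ℝ) : Continuous (heatK t) := by
  unfold heatK; fun_prop

lemma heatK_nonneg {t : ℝ} (ht : 0 < t) (x : E2) : 0 ≤ heatK t x := by
  unfold heatK; positivity

lemma heatK_le {t : ℝ} (ht : 0 < t) (x : E2) : heatK t x ≤ (4 * Real.pi * t)⁻¹ := by
  unfold heatK
  have h1 : Real.exp (-‖x‖ ^ 2 / (4 * t)) ≤ 1 := by
    rw [Real.exp_le_one_iff]
    have : (0:ℝ) ≤ ‖x‖^2 / (4*t) := by positivity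
    linarith [neg_div (4*t) (‖x‖^2)]
  have h2 : (0:ℝ) ≤ (4 * Real.pi * t)⁻¹ := by positivity
  calc (4 * Real.pi * t)⁻¹ * Real.exp (-‖x‖ ^ 2 / (4 * t)) ≤ (4 * Real.pi * t)⁻¹ * 1 := by
        exact mul_le_mul_of_nonneg_left h1 h2
    _ = _ := mul_one _

lemma integral_heatK {t : ℝ} (ht : 0 < t) : ∫ x : E2, heatK t x = 1 := by
  have hb : (0:ℝ) < (4*t)⁻¹ := by positivity
  have key := GaussianFourier.integral_rexp_neg_mul_sq_norm (V := E2) hb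
  have hre : ∀ x : E2, heatK t x = (4 * Real.pi * t)⁻¹ * Real.exp (-(4*t)⁻¹ * ‖x‖^2) := by
    intro x; unfold heatK; ring_nf
  rw [show (fun x : E2 => heatK t x) = fun x : E2 => (4 * Real.pi * t)⁻¹ * Real.exp (-(4*t)⁻¹ * ‖x‖^2) from funext hre]
  rw [integral_const_mul, key]
  have : (Module.finrank ℝ E2 : ℝ) = 2 := by
    simp [finrank_euclideanSpace_fin]
  rw [this]
  rw [show (2:ℝ)/2 = 1 by norm_num, Real.rpow_one]
  field_simp

lemma integrable_heatK {t : ℝ} (ht : 0 < t) : Integrable (heatK t) volume := by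
  have hb : (0:ℝ) < (4*t)⁻¹ := by positivity
  have h := (GaussianFourier.integrable_cexp_neg_mul_sq_norm_add
    (V := E2) (b := ((4*t)⁻¹ : ℂ)) (by simpa using hb) 0 0).norm
  have heq : (fun x : E2 => ‖Complex.exp (-(((4*t)⁻¹ : ℂ)) * ‖x‖^2 + 0 * (inner ℝ (0:E2) x : ℝ))‖)
      = fun x : E2 => Real.exp (-(4*t)⁻¹ * ‖x‖^2) := by
    funext x
    rw [Complex.norm_exp]
    norm_num [← Complex.ofReal_pow]
  rw [heq] at h
  have : (fun x : E2 => heatK t x) = fun x : E2 => (4 * Real.pi * t)⁻¹ * Real.exp (-(4*t)⁻¹ * ‖x‖^2) := by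
    funext x; unfold heatK; ring_nf
  show Integrable (fun x : E2 => heatK t x) volume
  rw [this]
  exact h.const_mul _

lemma lintegral_heatK {t : ℝ} (ht : 0 < t) :
    ∫⁻ x : E2, ENNReal.ofReal (heatK t x) = 1 := by
  rw [← ofReal_integral_eq_lintegral_ofReal (integrable_heatK ht)
    (Eventually.of_forall (heatK_nonneg ht))]
  rw [integral_heatK ht]
  simp

/-- heat extension of a (nonnegative) measure -/
def H (ν : Measure E2) (t : ℝ) (x : E2) : ℝ := ∫ y, heatK t (x - y) ∂ν

lemma H_meas (ν : Measure E2) [SFinite ν] (t : ℝ) :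
    AEStronglyMeasurable (H ν t) volume := by
  have hc : Continuous (fun z : E2 × E2 => heatK t (z.1 - z.2)) :=
    (heatK_cont t).comp (continuous_fst.sub continuous_snd)
  exact (hc.stronglyMeasurable.integral_prod_right').aestronglyMeasurable

lemma integrable_heatK_shift (ν : Measure E2) [IsFiniteMeasure ν] {t : ℝ} (ht : 0 < t) (x : E2) :
    Integrable (fun y => heatK t (x - y)) ν := by
  refine (integrable_const ((4 * Real.pi * t)⁻¹)).mono'
    (((heatK_cont t).comp (continuous_const.sub continuous_id)).aestronglyMeasurable) ?_
  filter_upwards with y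
  rw [Real.norm_eq_abs, abs_of_nonneg (heatK_nonneg ht _)]
  exact heatK_le ht _

lemma H_nonneg (ν : Measure E2) {t : ℝ} (ht : 0 < t) (x : E2) : 0 ≤ H ν t x :=
  integral_nonneg fun y => heatK_nonneg ht _

lemma H_bound (ν : Measure E2) [IsFiniteMeasure ν] {t δ ε : ℝ} (ht : 0 < t) (hδ : 0 < δ)
    (hε : 0 ≤ ε) (hb : ∀ x, ν (closedBall x δ) ≤ ENNReal.ofReal ε) (x : E2) :
    H ν t x ≤ (4 * Real.pi * t)⁻¹ * (ε + Real.exp (-δ^2/(4*t)) * (ν Set.univ).toReal) := by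
  have hint := integrable_heatK_shift ν ht x
  have hsplit : H ν t x = (∫ y in closedBall x δ, heatK t (x - y) ∂ν)
      + ∫ y in (closedBall x δ)ᶜ, heatK t (x - y) ∂ν := by
    rw [H, ← integral_add_compl (measurableSet_closedBall) hint]
  have h1 : (∫ y in closedBall x δ, heatK t (x - y) ∂ν) ≤ (4 * Real.pi * t)⁻¹ * ε := by
    have hle := norm_setIntegral_le_of_norm_le_const (μ := ν) (s := closedBall x δ)
      (f := fun y => heatK t (x - y)) (C := (4 * Real.pi * t)⁻¹)
      (measure_lt_top ν _) ?_
    · refine le_trans (le_abs_self _) (le_trans ((Real.norm_eq_abs _).symm ▸ hle) ?_)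
      have hto : (ν (closedBall x δ)).toReal ≤ ε :=
        ENNReal.toReal_le_of_le_ofReal hε (hb x)
      calc (4 * Real.pi * t)⁻¹ * (ν (closedBall x δ)).toReal
          ≤ (4 * Real.pi * t)⁻¹ * ε := by
            apply mul_le_mul_of_nonneg_left hto (by positivity)
        _ = _ := rfl
    · intro y _
      rw [Real.norm_eq_abs, abs_of_nonneg (heatK_nonneg ht _)]
      exact heatK_le ht _
  have h2 : (∫ y in (closedBall x δ)ᶜ, heatK t (x - y) ∂ν)
      ≤ (4 * Real.pi * t)⁻¹ * (Real.exp (-δ^2/(4*t)) * (ν Set.univ).toReal) := by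
    have hC : ∀ y ∈ (closedBall x δ)ᶜ, ‖heatK t (x - y)‖ ≤
        (4 * Real.pi * t)⁻¹ * Real.exp (-δ^2/(4*t)) := by
      intro y hy
      rw [Set.mem_compl_iff, Metric.mem_closedBall, not_le] at hy
      rw [Real.norm_eq_abs, abs_of_nonneg (heatK_nonneg ht _)]
      unfold heatK
      have hnorm : δ ≤ ‖x - y‖ := by
        rw [← dist_eq_norm]
        exact le_of_lt (by rwa [dist_comm] at hy)
      have hexp : Real.exp (-‖x - y‖^2/(4*t)) ≤ Real.exp (-δ^2/(4*t)) := by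
        apply Real.exp_le_exp.2
        rw [div_le_div_iff_of_pos_right (by positivity), neg_le_neg_iff]
        exact pow_le_pow_left₀ hδ.le hnorm 2
      exact mul_le_mul_of_nonneg_left hexp (by positivity)
    have hle := norm_setIntegral_le_of_norm_le_const (μ := ν) (s := (closedBall x δ)ᶜ)
      (f := fun y => heatK t (x - y)) (C := (4 * Real.pi * t)⁻¹ * Real.exp (-δ^2/(4*t)))
      (measure_lt_top ν _) hC
    refine le_trans (le_abs_self _) (le_trans ((Real.norm_eq_abs _).symm ▸ hle) ?_)
    rw [mul_assoc]
    apply mul_le_mul_of_nonneg_left _ (by positivity)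
    apply mul_le_mul_of_nonneg_left _ (by positivity)
    exact ENNReal.toReal_mono (measure_ne_top ν _) (measure_mono (Set.subset_univ _))
  calc H ν t x = _ := hsplit
    _ ≤ (4 * Real.pi * t)⁻¹ * ε + (4 * Real.pi * t)⁻¹ * (Real.exp (-δ^2/(4*t)) * (ν Set.univ).toReal) :=
        add_le_add h1 h2
    _ = _ := by ring

lemma H_l1 (ν : Measure E2) [IsFiniteMeasure ν] {t : ℝ} (ht : 0 < t) :
    ∫⁻ x, ENNReal.ofReal (H ν t x) ∂(volume : Measure E2) ≤ ν Set.univ := by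
  have hmeas : AEMeasurable (Function.uncurry fun x y : E2 => ENNReal.ofReal (heatK t (x - y)))
      ((volume : Measure E2).prod ν) := by
    apply Measurable.aemeasurable
    apply ENNReal.measurable_ofReal.comp
    exact ((heatK_cont t).comp (continuous_fst.sub continuous_snd)).measurable
  have step1 : ∀ x, ENNReal.ofReal (H ν t x) ≤ ∫⁻ y, ENNReal.ofReal (heatK t (x - y)) ∂ν := by
    intro x
    rw [H, ← ofReal_integral_eq_lintegral_ofReal (integrable_heatK_shift ν ht x)
      (Eventually.of_forall fun y => heatK_nonneg ht _)]
  calc ∫⁻ x, ENNReal.ofReal (H ν t x) ∂(volume : Measure E2)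
      ≤ ∫⁻ x, ∫⁻ y, ENNReal.ofReal (heatK t (x - y)) ∂ν ∂(volume : Measure E2) :=
        lintegral_mono step1
    _ = ∫⁻ y, ∫⁻ x, ENNReal.ofReal (heatK t (x - y)) ∂(volume : Measure E2) ∂ν :=
        lintegral_lintegral_swap hmeas
    _ = ∫⁻ y, (1 : ℝ≥0∞) ∂ν := by
        apply lintegral_congr
        intro y
        have := lintegral_sub_right_eq_self (μ := (volume : Measure E2))
          (fun x => ENNReal.ofReal (heatK t x)) y
        rw [this, lintegral_heatK ht]
    _ = ν Set.univ := by simp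

lemma interp {p : ℝ≥0∞} (hp : 1 < p) {h : E2 → ℝ} (hm : AEStronglyMeasurable h volume)
    {A : ℝ} (hA : 0 ≤ A) (h0 : ∀ x, 0 ≤ h x) (hhA : ∀ x, h x ≤ A) {B : ℝ≥0∞}
    (hB : ∫⁻ x, ENNReal.ofReal (h x) ∂(volume : Measure E2) ≤ B) :
    eLpNorm h p volume ≤ ENNReal.ofReal A ^ (1 - 1/p.toReal) * B ^ (1/p.toReal) := by
  by_cases hptop : p = ∞
  · subst hptop
    simp only [ENNReal.toReal_top, div_zero, sub_zero, one_div]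
    rw [eLpNorm_exponent_top]
    have h1 : eLpNormEssSup h volume ≤ ENNReal.ofReal A := by
      apply eLpNormEssSup_le_of_ae_bound (C := A)
      filter_upwards with x
      rw [Real.norm_eq_abs, abs_of_nonneg (h0 x)]
      exact hhA x
    calc eLpNormEssSup h volume ≤ ENNReal.ofReal A := h1
      _ = ENNReal.ofReal A ^ (1:ℝ) * 1 := by rw [ENNReal.rpow_one, mul_one]
      _ = _ := by
        rw [ENNReal.rpow_zero]
  · have hq1 : 1 < p.toReal := by
      rw [← ENNReal.toReal_one]
      exact ENNReal.toReal_strict_mono hptop hp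
    set q := p.toReal with hq
    have hq0 : 0 < q := lt_trans one_pos hq1
    have hnorm : ∀ x, (‖h x‖₊ : ℝ≥0∞) = ENNReal.ofReal (h x) := fun x =>
      (Real.enorm_eq_ofReal (h0 x))
    rw [eLpNorm_eq_lintegral_rpow_enorm_toReal (by positivity) hptop]
    have key : ∀ x, (‖h x‖₊ : ℝ≥0∞) ^ q ≤ ENNReal.ofReal A ^ (q - 1) * ENNReal.ofReal (h x) := by
      intro x
      rw [hnorm x]
      calc ENNReal.ofReal (h x) ^ q
          = ENNReal.ofReal (h x) ^ (q - 1) * ENNReal.ofReal (h x) ^ (1:ℝ) := by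
            rw [← ENNReal.rpow_add_of_nonneg _ _ (by linarith) zero_le_one]
            norm_num
        _ ≤ ENNReal.ofReal A ^ (q - 1) * ENNReal.ofReal (h x) ^ (1:ℝ) := by
            apply mul_le_mul_left
            exact ENNReal.rpow_le_rpow (ENNReal.ofReal_le_ofReal (hhA x)) (by linarith)
        _ = _ := by rw [ENNReal.rpow_one]
    have hint : (∫⁻ x, (‖h x‖₊ : ℝ≥0∞) ^ q ∂(volume : Measure E2))
        ≤ ENNReal.ofReal A ^ (q - 1) * B := by
      calc (∫⁻ x, (‖h x‖₊ : ℝ≥0∞) ^ q ∂(volume : Measure E2))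
          ≤ ∫⁻ x, ENNReal.ofReal A ^ (q - 1) * ENNReal.ofReal (h x) ∂(volume : Measure E2) :=
            lintegral_mono key
        _ = ENNReal.ofReal A ^ (q - 1) * ∫⁻ x, ENNReal.ofReal (h x) ∂(volume : Measure E2) :=
            lintegral_const_mul' _ _ (by
              apply ENNReal.rpow_ne_top_of_nonneg (by linarith)
              exact ENNReal.ofReal_ne_top)
        _ ≤ _ := mul_le_mul_right hB _
    calc (∫⁻ x, (‖h x‖₊ : ℝ≥0∞) ^ q ∂(volume : Measure E2)) ^ (1/q)
        ≤ (ENNReal.ofReal A ^ (q - 1) * B) ^ (1/q) :=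
          ENNReal.rpow_le_rpow hint (by positivity)
      _ = (ENNReal.ofReal A ^ (q - 1)) ^ (1/q) * B ^ (1/q) :=
          ENNReal.mul_rpow_of_nonneg _ _ (by positivity)
      _ = ENNReal.ofReal A ^ (1 - 1/q) * B ^ (1/q) := by
          rw [← ENNReal.rpow_mul]
          congr 1
          field_simp

lemma alpha_pos {p : ℝ≥0∞} (hp : 1 < p) : 0 < 1 - 1/p.toReal := by
  by_cases hptop : p = ∞
  · subst hptop; norm_num
  · have hq1 : 1 < p.toReal := by
      rw [← ENNReal.toReal_one]
      exact ENNReal.toReal_strict_mono hptop hp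
    have : 1/p.toReal < 1 := by
      rw [div_lt_one (by linarith)]; exact hq1
    linarith

lemma alpha_le_one {p : ℝ≥0∞} : 1 - 1/p.toReal ≤ 1 := by
  have : 0 ≤ 1/p.toReal := by positivity
  linarith

lemma master (ν : Measure E2) [IsFiniteMeasure ν] {p : ℝ≥0∞} (hp : 1 < p)
    {t δ ε : ℝ} (ht : 0 < t) (hδ : 0 < δ) (hε : 0 ≤ ε)
    (hb : ∀ x, ν (closedBall x δ) ≤ ENNReal.ofReal ε) :
    ENNReal.ofReal (t ^ (1 - 1/p.toReal)) * eLpNorm (H ν t) p volume ≤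
      ENNReal.ofReal ((4*Real.pi)⁻¹ * (ε + Real.exp (-δ^2/(4*t)) * (ν Set.univ).toReal))
        ^ (1 - 1/p.toReal) * (ν Set.univ) ^ (1/p.toReal) := by
  set α := 1 - 1/p.toReal with hα
  set M := (ν Set.univ).toReal with hM
  have hM0 : 0 ≤ M := ENNReal.toReal_nonneg
  set At := (4 * Real.pi * t)⁻¹ * (ε + Real.exp (-δ^2/(4*t)) * M) with hAt
  have hAt0 : 0 ≤ At := by positivity
  have h1 := interp hp (H_meas ν t) hAt0 (fun x => H_nonneg ν ht x)
    (fun x => H_bound ν ht hδ hε hb x) (le_refl (∫⁻ x, ENNReal.ofReal (H ν t x) ∂(volume : Measure E2)))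
  have h1' : eLpNorm (H ν t) p volume ≤ ENNReal.ofReal At ^ α * (ν Set.univ) ^ (1/p.toReal) := by
    refine le_trans h1 ?_
    apply mul_le_mul_right
    exact ENNReal.rpow_le_rpow (H_l1 ν ht) (by positivity)
  calc ENNReal.ofReal (t ^ α) * eLpNorm (H ν t) p volume
      ≤ ENNReal.ofReal (t ^ α) * (ENNReal.ofReal At ^ α * (ν Set.univ) ^ (1/p.toReal)) :=
        mul_le_mul_right h1' _
    _ = (ENNReal.ofReal t ^ α * ENNReal.ofReal At ^ α) * (ν Set.univ) ^ (1/p.toReal) := by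
        rw [ENNReal.ofReal_rpow_of_pos ht, mul_assoc]
    _ = (ENNReal.ofReal t * ENNReal.ofReal At) ^ α * (ν Set.univ) ^ (1/p.toReal) := by
        rw [ENNReal.mul_rpow_of_nonneg _ _ (le_of_lt (alpha_pos hp))]
    _ = ENNReal.ofReal (t * At) ^ α * (ν Set.univ) ^ (1/p.toReal) := by
        rw [ENNReal.ofReal_mul ht.le]
    _ = _ := by
        congr 2
        rw [hAt]
        field_simp

lemma tail_tendsto {δ : ℝ} (hδ : 0 < δ) :
    Tendsto (fun t : ℝ => Real.exp (-δ^2/(4*t))) (𝓝[>] 0) (𝓝 0) := by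
  have h0 : Tendsto (fun t : ℝ => t⁻¹) (𝓝[>] (0:ℝ)) atTop := tendsto_inv_nhdsGT_zero
  have h1 : Tendsto (fun t : ℝ => -δ^2/(4*t)) (𝓝[>] 0) atBot := by
    have hc : (-δ^2 * 4⁻¹ : ℝ) < 0 := by nlinarith [sq_nonneg δ, pow_pos hδ 2]
    have h2 := h0.atTop_mul_const_of_neg hc
    refine h2.congr (fun t => ?_)
    rw [div_eq_mul_inv, mul_inv]
    ring
  exact Real.tendsto_exp_atBot.comp h1

lemma limsup_H_le (ν : Measure E2) [IsFiniteMeasure ν] {p : ℝ≥0∞} (hp : 1 < p)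
    {δ ε : ℝ} (hδ : 0 < δ) (hε : 0 ≤ ε)
    (hb : ∀ x, ν (closedBall x δ) ≤ ENNReal.ofReal ε) :
    Filter.limsup (fun t : ℝ => ENNReal.ofReal (t ^ (1 - 1/p.toReal)) * eLpNorm (H ν t) p volume)
      (𝓝[>] (0:ℝ)) ≤
    ENNReal.ofReal ((4*Real.pi)⁻¹ * ε) ^ (1 - 1/p.toReal) * (ν Set.univ) ^ (1/p.toReal) := by
  set α := 1 - 1/p.toReal with hα
  set M := (ν Set.univ).toReal with hM
  set G := fun t : ℝ => ENNReal.ofReal ((4*Real.pi)⁻¹ * (ε + Real.exp (-δ^2/(4*t)) * M)) ^ α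
    * (ν Set.univ) ^ (1/p.toReal) with hG
  have hFG : ∀ᶠ t in 𝓝[>] (0:ℝ),
      ENNReal.ofReal (t ^ α) * eLpNorm (H ν t) p volume ≤ G t := by
    filter_upwards [eventually_mem_nhdsWithin] with t ht
    exact master ν hp ht hδ hε hb
  have hGt : Tendsto G (𝓝[>] (0:ℝ))
      (𝓝 (ENNReal.ofReal ((4*Real.pi)⁻¹ * ε) ^ α * (ν Set.univ) ^ (1/p.toReal))) := by
    have hreal : Tendsto (fun t : ℝ => (4*Real.pi)⁻¹ * (ε + Real.exp (-δ^2/(4*t)) * M))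
        (𝓝[>] 0) (𝓝 ((4*Real.pi)⁻¹ * ε)) := by
      have := ((tail_tendsto hδ).mul_const M).const_add ε
      have h2 := this.const_mul ((4*Real.pi)⁻¹)
      simpa using h2
    have hofreal := (ENNReal.continuous_ofReal.tendsto _).comp hreal
    have hrpow := ((ENNReal.continuous_rpow_const (y := α)).tendsto _).comp hofreal
    exact ENNReal.Tendsto.mul_const hrpow
      (Or.inr (ENNReal.rpow_ne_top_of_nonneg (by positivity) (measure_ne_top ν _)))
  calc Filter.limsup (fun t : ℝ => ENNReal.ofReal (t ^ α) * eLpNorm (H ν t) p volume) (𝓝[>] (0:ℝ))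
      ≤ Filter.limsup G (𝓝[>] (0:ℝ)) := limsup_le_limsup hFG
    _ = _ := hGt.limsup_eq

lemma small_balls (ν : Measure E2) [IsFiniteMeasure ν] (hν : ∀ x : E2, ν {x} = 0)
    {ε : ℝ} (hε : 0 < ε) : ∃ δ : ℝ, 0 < δ ∧ ∀ x, ν (closedBall x δ) ≤ ENNReal.ofReal ε := by
  by_contra hcon
  push_neg at hcon
  set e := ENNReal.ofReal ε with hedef
  have he : 0 < e := ENNReal.ofReal_pos.2 hε
  have key : ∀ n : ℕ, ∃ x : E2, e < ν (closedBall x (1/(n+1))) := by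
    intro n
    obtain ⟨x, hx⟩ := hcon (1/(n+1)) (by positivity)
    exact ⟨x, hx⟩
  choose xs hxs using key
  -- tightness
  have hcompl : Tendsto (fun n : ℕ => ν ((Metric.ball (0:E2) n)ᶜ)) atTop (𝓝 (ν (⋂ n : ℕ, (Metric.ball (0:E2) n)ᶜ))) := by
    apply tendsto_measure_iInter_atTop (fun n => (measurableSet_ball.compl).nullMeasurableSet)
      (fun a b hab => Set.compl_subset_compl.2 (Metric.ball_subset_ball (by exact_mod_cast hab)))
      ⟨0, measure_ne_top ν _⟩
  have hiInter : (⋂ n : ℕ, (Metric.ball (0:E2) n)ᶜ) = ∅ := by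
    ext x
    simp only [Set.mem_iInter, Set.mem_compl_iff, Metric.mem_ball, not_lt, Set.mem_empty_iff_false,
      iff_false, not_forall, not_le]
    obtain ⟨n, hn⟩ := exists_nat_gt (dist x 0)
    exact ⟨n, hn⟩
  rw [hiInter, measure_empty] at hcompl
  obtain ⟨R, hR⟩ := (hcompl.eventually (Iio_mem_nhds he)).exists
  -- boundedness
  have hmem : ∀ n, xs n ∈ closedBall (0:E2) (R+1) := by
    intro n
    by_contra hout
    rw [Metric.mem_closedBall, not_le] at hout
    have hsub : closedBall (xs n) (1/(n+1)) ⊆ (Metric.ball (0:E2) R)ᶜ := by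
      intro y hy
      rw [Metric.mem_closedBall] at hy
      rw [Set.mem_compl_iff, Metric.mem_ball, not_lt]
      have h1 : (1:ℝ)/(n+1) ≤ 1 := by
        rw [div_le_one (by positivity)]; linarith [Nat.cast_nonneg (α := ℝ) n]
      have htri : dist (xs n) 0 ≤ dist (xs n) y + dist y 0 := dist_triangle _ _ _
      rw [dist_comm (xs n) y] at htri
      linarith
    have := le_trans (hxs n).le (measure_mono hsub)
    exact absurd (lt_of_le_of_lt this hR) (lt_irrefl _)
  obtain ⟨x, -, φ, hφ, hlim⟩ := (isCompact_closedBall (0:E2) (R+1)).tendsto_subseq hmem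
  -- e ≤ ν (closedBall x r) for all r > 0
  have hr : ∀ r : ℝ, 0 < r → e ≤ ν (closedBall x r) := by
    intro r hr
    obtain ⟨N₁, hN₁⟩ := Metric.tendsto_atTop.1 hlim (r/2) (by positivity)
    obtain ⟨N₂, hN₂⟩ := exists_nat_one_div_lt (half_pos hr)
    set n := max N₁ N₂ with hn
    have h1 : dist (xs (φ n)) x < r/2 := hN₁ n (le_max_left _ _)
    have h2 : (1:ℝ)/(φ n + 1) ≤ r/2 := by
      have hφn : (n:ℝ) ≤ φ n := by exact_mod_cast hφ.le_apply
      have : (1:ℝ)/(φ n + 1) ≤ 1/(N₂+1) := by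
        apply div_le_div_of_nonneg_left one_pos.le (by positivity)
        have : (N₂:ℝ) ≤ n := by exact_mod_cast le_max_right N₁ N₂
        linarith
      exact le_trans this hN₂.le
    have hsub : closedBall (xs (φ n)) (1/(φ n + 1)) ⊆ closedBall x r := by
      intro y hy
      rw [Metric.mem_closedBall] at hy ⊢
      calc dist y x ≤ dist y (xs (φ n)) + dist (xs (φ n)) x := dist_triangle _ _ _
        _ ≤ r/2 + r/2 := add_le_add (le_trans hy h2) h1.le
        _ = r := by ring
    exact le_trans (hxs (φ n)).le (measure_mono hsub)
  -- conclude ν {x} ≥ e > 0, contradiction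
  have hthick : Tendsto (fun r => ν (Metric.cthickening r {x})) (𝓝[>] (0:ℝ)) (𝓝 0) := by
    have := tendsto_measure_cthickening_of_isClosed (μ := ν) (s := {x})
      ⟨1, one_pos, measure_ne_top ν _⟩ isClosed_singleton
    rw [hν x] at this
    exact this.mono_left nhdsWithin_le_nhds
  have hev : ∀ᶠ r in 𝓝[>] (0:ℝ), e ≤ ν (Metric.cthickening r {x}) := by
    filter_upwards [eventually_mem_nhdsWithin] with r hrr
    rw [Metric.cthickening_singleton x (le_of_lt hrr)]
    exact hr r hrr
  have : e ≤ 0 := ge_of_tendsto hthick hev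
  exact absurd (lt_of_lt_of_le he this) (lt_irrefl _)

lemma limsup_sum_le (νa νc : Measure E2) [IsFiniteMeasure νa] [IsFiniteMeasure νc]
    {p : ℝ≥0∞} (hp : 1 < p) {δa δc εa εc : ℝ} (hδa : 0 < δa) (hδc : 0 < δc)
    (hεa : 0 ≤ εa) (hεc : 0 ≤ εc)
    (hba : ∀ x, νa (closedBall x δa) ≤ ENNReal.ofReal εa)
    (hbc : ∀ x, νc (closedBall x δc) ≤ ENNReal.ofReal εc) :
    Filter.limsup (fun t : ℝ => ENNReal.ofReal (t ^ (1 - 1/p.toReal)) * eLpNorm (H νa t) p volume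
        + ENNReal.ofReal (t ^ (1 - 1/p.toReal)) * eLpNorm (H νc t) p volume) (𝓝[>] (0:ℝ)) ≤
      ENNReal.ofReal ((4*Real.pi)⁻¹ * εa) ^ (1 - 1/p.toReal) * (νa Set.univ) ^ (1/p.toReal)
        + ENNReal.ofReal ((4*Real.pi)⁻¹ * εc) ^ (1 - 1/p.toReal) * (νc Set.univ) ^ (1/p.toReal) := by
  set α := 1 - 1/p.toReal with hα
  set Ga := fun t : ℝ => ENNReal.ofReal ((4*Real.pi)⁻¹ * (εa + Real.exp (-δa^2/(4*t)) * (νa Set.univ).toReal)) ^ α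
    * (νa Set.univ) ^ (1/p.toReal) with hGa
  set Gc := fun t : ℝ => ENNReal.ofReal ((4*Real.pi)⁻¹ * (εc + Real.exp (-δc^2/(4*t)) * (νc Set.univ).toReal)) ^ α
    * (νc Set.univ) ^ (1/p.toReal) with hGc
  have hFG : ∀ᶠ t in 𝓝[>] (0:ℝ),
      ENNReal.ofReal (t ^ α) * eLpNorm (H νa t) p volume
        + ENNReal.ofReal (t ^ α) * eLpNorm (H νc t) p volume ≤ Ga t + Gc t := by
    filter_upwards [eventually_mem_nhdsWithin] with t ht
    exact add_le_add (master νa hp ht hδa hεa hba) (master νc hp ht hδc hεc hbc)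
  have htend : ∀ (ν : Measure E2) (_ : IsFiniteMeasure ν) (δ ε : ℝ), 0 < δ →
      Tendsto (fun t : ℝ => ENNReal.ofReal ((4*Real.pi)⁻¹ * (ε + Real.exp (-δ^2/(4*t)) * (ν Set.univ).toReal)) ^ α
        * (ν Set.univ) ^ (1/p.toReal)) (𝓝[>] (0:ℝ))
        (𝓝 (ENNReal.ofReal ((4*Real.pi)⁻¹ * ε) ^ α * (ν Set.univ) ^ (1/p.toReal))) := by
    intro ν hfin δ ε hδ
    have hreal : Tendsto (fun t : ℝ => (4*Real.pi)⁻¹ * (ε + Real.exp (-δ^2/(4*t)) * (ν Set.univ).toReal))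
        (𝓝[>] 0) (𝓝 ((4*Real.pi)⁻¹ * ε)) := by
      have := ((tail_tendsto hδ).mul_const (ν Set.univ).toReal).const_add ε
      have h2 := this.const_mul ((4*Real.pi)⁻¹)
      simpa using h2
    have hofreal := (ENNReal.continuous_ofReal.tendsto _).comp hreal
    have hrpow := ((ENNReal.continuous_rpow_const (y := α)).tendsto _).comp hofreal
    exact ENNReal.Tendsto.mul_const hrpow
      (Or.inr (ENNReal.rpow_ne_top_of_nonneg (by positivity) (measure_ne_top ν _)))
  have hGt : Tendsto (fun t => Ga t + Gc t) (𝓝[>] (0:ℝ))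
      (𝓝 (ENNReal.ofReal ((4*Real.pi)⁻¹ * εa) ^ α * (νa Set.univ) ^ (1/p.toReal)
        + ENNReal.ofReal ((4*Real.pi)⁻¹ * εc) ^ α * (νc Set.univ) ^ (1/p.toReal))) :=
    (htend νa inferInstance δa εa hδa).add (htend νc inferInstance δc εc hδc)
  calc Filter.limsup _ (𝓝[>] (0:ℝ)) ≤ Filter.limsup (fun t => Ga t + Gc t) (𝓝[>] (0:ℝ)) :=
        limsup_le_limsup hFG
    _ = _ := hGt.limsup_eq

end Aux

open Metric Set in
/-- For a finite signed Borel measure `μ` on `ℝ²` and `p ∈ (1,∞]`,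
`limsup_{t→0⁺} t^{1-1/p} ‖e^{tΔ}μ‖_{L^p} ≤ C_p ‖μ‖_{pp}`, where
`‖μ‖_{pp} = ∑_{x} |μ({x})|` is the total variation of the atomic part. -/
theorem heat_atomic_limsup (p : ℝ≥0∞) (hp : 1 < p) :
    ∃ C : ℝ, 0 < C ∧ ∀ μ : MeasureTheory.SignedMeasure (EuclideanSpace ℝ (Fin 2)),
      Filter.limsup
        (fun t : ℝ => ENNReal.ofReal (t ^ (1 - 1 / p.toReal)) *
          eLpNorm (heatEvol μ t) p volume) (𝓝[>] (0 : ℝ)) ≤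
        ENNReal.ofReal (C * ∑' x : EuclideanSpace ℝ (Fin 2), |μ {x}|) := by
  refine ⟨1, one_pos, fun μ => ?_⟩
  have hαpos : 0 < 1 - 1/p.toReal := alpha_pos hp
  set P := μ.toJordanDecomposition.posPart with hPdef
  set N := μ.toJordanDecomposition.negPart with hNdef
  set ρ := P + N with hρdef
  -- atoms of ρ vs |μ {x}|
  have hatom : ∀ x : E2, ρ {x} = ENNReal.ofReal |μ {x}| := by
    intro x
    obtain ⟨u, hum, hu1, hu2⟩ := μ.toJordanDecomposition.mutuallySingular
    have happ : μ {x} = (P {x}).toReal - (N {x}).toReal := by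
      conv_lhs => rw [← μ.toSignedMeasure_toJordanDecomposition]
      rw [JordanDecomposition.toSignedMeasure]
      exact Measure.toSignedMeasure_sub_apply (measurableSet_singleton x)
    by_cases hx : x ∈ u
    · have hP0 : P {x} = 0 := measure_mono_null (Set.singleton_subset_iff.2 hx) hu1
      rw [Measure.add_apply, hP0, zero_add, happ, hP0]
      simp only [ENNReal.toReal_zero, zero_sub, abs_neg, abs_of_nonneg ENNReal.toReal_nonneg]
      rw [ENNReal.ofReal_toReal (measure_ne_top N _)]
    · have hN0 : N {x} = 0 :=
        measure_mono_null (Set.singleton_subset_iff.2 (Set.mem_compl hx)) hu2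
      rw [Measure.add_apply, hN0, add_zero, happ, hN0]
      simp only [ENNReal.toReal_zero, sub_zero, abs_of_nonneg ENNReal.toReal_nonneg]
      rw [ENNReal.ofReal_toReal (measure_ne_top P _)]
  -- countable atom set
  set S := {x : E2 | ρ {x} ≠ 0} with hSdef
  have hScount : S.Countable := by
    have h := MeasureTheory.Measure.countable_meas_pos_of_disjoint_iUnion (μ := ρ)
      (As := fun x : E2 => ({x} : Set E2)) (fun x => measurableSet_singleton x)
      (fun x y hxy => by simpa [Function.onFun] using Set.disjoint_singleton.2 hxy)
    convert h using 1
    ext x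
    simp [hSdef, pos_iff_ne_zero]
  have hSm : MeasurableSet S := hScount.measurableSet
  set νa := ρ.restrict S with hνa
  set νc := ρ.restrict Sᶜ with hνc
  have hc_noatom : ∀ x : E2, νc {x} = 0 := by
    intro x
    by_cases hx : x ∈ S
    · rw [hνc, Measure.restrict_apply (measurableSet_singleton x)]
      have : ({x} : Set E2) ∩ Sᶜ = ∅ := by
        ext y; simp only [Set.mem_inter_iff, Set.mem_singleton_iff, Set.mem_compl_iff,
          Set.mem_empty_iff_false, iff_false, not_and]
        rintro rfl; simpa using hx
      rw [this, measure_empty]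
    · have h0 : ρ {x} = 0 := by simpa [hSdef] using hx
      exact le_antisymm (le_trans (Measure.restrict_le_self _) h0.le) zero_le
  -- the RHS equals νa univ
  have hRHS : ENNReal.ofReal ((1:ℝ) * ∑' x : E2, |μ {x}|) = νa Set.univ := by
    have h1 : ∀ x : E2, |μ {x}| = (ρ {x}).toReal := by
      intro x
      rw [hatom x, ENNReal.toReal_ofReal (abs_nonneg _)]
    have h2 : ∑' x : E2, |μ {x}| = (∑' x : E2, ρ {x}).toReal := by
      rw [ENNReal.tsum_toReal_eq (fun x => measure_ne_top ρ _)]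
      exact tsum_congr h1
    have h3 : (∑' x : E2, ρ {x}) = νa Set.univ := by
      have hsupp : Function.support (fun x : E2 => ρ {x}) ⊆ S := by
        intro x hx; exact hx
      rw [← tsum_subtype_eq_of_support_subset hsupp]
      rw [hνa, Measure.restrict_apply_univ]
      have hS_eq : S = ⋃ x ∈ S, ({x} : Set E2) := by
        simp [Set.biUnion_of_singleton]
      conv_rhs => rw [hS_eq]
      rw [measure_biUnion hScount
        (fun x _ y _ hxy => Set.disjoint_singleton.2 hxy)
        (fun b _ => measurableSet_singleton b)]
    rw [one_mul, h2, h3, ENNReal.ofReal_toReal (measure_ne_top νa _)]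
  rw [hRHS]
  -- atomic-part ball bound
  set εa := (νa Set.univ).toReal with hεa
  have hεa0 : 0 ≤ εa := ENNReal.toReal_nonneg
  have hba : ∀ x, νa (closedBall x 1) ≤ ENNReal.ofReal εa := by
    intro x
    rw [hεa, ENNReal.ofReal_toReal (measure_ne_top νa _)]
    exact measure_mono (Set.subset_univ _)
  set La := ENNReal.ofReal ((4*Real.pi)⁻¹ * εa) ^ (1 - 1/p.toReal)
    * (νa Set.univ) ^ (1/p.toReal) with hLa_def
  have hLa : La ≤ νa Set.univ := by
    have h1 : ENNReal.ofReal ((4*Real.pi)⁻¹ * εa) ≤ νa Set.univ := by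
      calc ENNReal.ofReal ((4*Real.pi)⁻¹ * εa) ≤ ENNReal.ofReal εa := by
            apply ENNReal.ofReal_le_ofReal
            apply mul_le_of_le_one_left hεa0
            rw [inv_le_one_iff₀]
            right
            nlinarith [Real.pi_gt_three]
        _ = νa Set.univ := ENNReal.ofReal_toReal (measure_ne_top νa _)
    calc La ≤ (νa Set.univ) ^ (1 - 1/p.toReal) * (νa Set.univ) ^ (1/p.toReal) :=
          mul_le_mul_left (ENNReal.rpow_le_rpow h1 hαpos.le) _
      _ = (νa Set.univ) ^ ((1 - 1/p.toReal) + 1/p.toReal) :=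
          (ENNReal.rpow_add_of_nonneg _ _ hαpos.le (by positivity)).symm
      _ = νa Set.univ := by
          rw [show (1 - 1/p.toReal) + 1/p.toReal = 1 by ring, ENNReal.rpow_one]
  -- main per-ε bound
  have main : ∀ ε : ℝ, 0 < ε →
      Filter.limsup (fun t : ℝ => ENNReal.ofReal (t ^ (1 - 1 / p.toReal)) *
        eLpNorm (heatEvol μ t) p volume) (𝓝[>] (0 : ℝ)) ≤
      νa Set.univ + ENNReal.ofReal ((4*Real.pi)⁻¹ * ε) ^ (1 - 1/p.toReal)
        * (νc Set.univ) ^ (1/p.toReal) := by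
    intro ε hε
    obtain ⟨δc, hδc, hbc⟩ := small_balls νc hc_noatom hε
    have hev : ∀ᶠ t in 𝓝[>] (0:ℝ),
        ENNReal.ofReal (t ^ (1 - 1 / p.toReal)) * eLpNorm (heatEvol μ t) p volume ≤
        ENNReal.ofReal (t ^ (1 - 1 / p.toReal)) * eLpNorm (H νa t) p volume
          + ENNReal.ofReal (t ^ (1 - 1 / p.toReal)) * eLpNorm (H νc t) p volume := by
      filter_upwards [eventually_mem_nhdsWithin] with t ht
      have hmono : eLpNorm (heatEvol μ t) p volume
          ≤ eLpNorm (fun x => H νa t x + H νc t x) p volume := by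
        apply eLpNorm_mono
        intro x
        rw [Real.norm_eq_abs, Real.norm_eq_abs,
          abs_of_nonneg (add_nonneg (H_nonneg νa ht x) (H_nonneg νc ht x))]
        have hsplit : H ρ t x = H νa t x + H νc t x := by
          rw [H]
          conv_lhs => rw [← Measure.restrict_add_restrict_compl (μ := ρ) hSm]
          rw [integral_add_measure (integrable_heatK_shift _ ht x)
            (integrable_heatK_shift _ ht x)]
          rfl
        have hPN : H ρ t x = H P t x + H N t x := by
          rw [H, hρdef, integral_add_measure (integrable_heatK_shift P ht x)
            (integrable_heatK_shift N ht x)]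
          rfl
        have habs : |heatEvol μ t x| ≤ H P t x + H N t x := by
          rw [heatEvol]
          calc |(∫ y, heatK t (x - y) ∂μ.toJordanDecomposition.posPart) -
              ∫ y, heatK t (x - y) ∂μ.toJordanDecomposition.negPart|
              ≤ |∫ y, heatK t (x - y) ∂μ.toJordanDecomposition.posPart| +
                |∫ y, heatK t (x - y) ∂μ.toJordanDecomposition.negPart| := abs_sub _ _
            _ = H P t x + H N t x := by
                show |H P t x| + |H N t x| = H P t x + H N t x
                rw [abs_of_nonneg (H_nonneg P ht x), abs_of_nonneg (H_nonneg N ht x)]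
        linarith
      calc ENNReal.ofReal (t ^ (1 - 1 / p.toReal)) * eLpNorm (heatEvol μ t) p volume
          ≤ ENNReal.ofReal (t ^ (1 - 1 / p.toReal)) *
            eLpNorm (fun x => H νa t x + H νc t x) p volume := mul_le_mul_right hmono _
        _ ≤ ENNReal.ofReal (t ^ (1 - 1 / p.toReal)) *
            (eLpNorm (H νa t) p volume + eLpNorm (H νc t) p volume) :=
              mul_le_mul_right (eLpNorm_add_le (H_meas νa t) (H_meas νc t) hp.le) _
        _ = _ := mul_add _ _ _
    calc Filter.limsup (fun t : ℝ => ENNReal.ofReal (t ^ (1 - 1 / p.toReal)) *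
          eLpNorm (heatEvol μ t) p volume) (𝓝[>] (0 : ℝ))
        ≤ Filter.limsup (fun t : ℝ =>
            ENNReal.ofReal (t ^ (1 - 1 / p.toReal)) * eLpNorm (H νa t) p volume
            + ENNReal.ofReal (t ^ (1 - 1 / p.toReal)) * eLpNorm (H νc t) p volume)
            (𝓝[>] (0 : ℝ)) := limsup_le_limsup hev
      _ ≤ La + ENNReal.ofReal ((4*Real.pi)⁻¹ * ε) ^ (1 - 1/p.toReal)
            * (νc Set.univ) ^ (1/p.toReal) :=
          limsup_sum_le νa νc hp one_pos hδc hεa0 hε.le hba hbc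
      _ ≤ _ := add_le_add_left hLa _
  -- let ε → 0
  have htend : Tendsto (fun ε : ℝ => νa Set.univ + ENNReal.ofReal ((4*Real.pi)⁻¹ * ε)
      ^ (1 - 1/p.toReal) * (νc Set.univ) ^ (1/p.toReal)) (𝓝[>] (0:ℝ))
      (𝓝 (νa Set.univ)) := by
    have hreal : Tendsto (fun ε : ℝ => (4*Real.pi)⁻¹ * ε) (𝓝[>] (0:ℝ)) (𝓝 0) := by
      have h0 : Tendsto (fun ε : ℝ => (4*Real.pi)⁻¹ * ε) (𝓝 (0:ℝ)) (𝓝 ((4*Real.pi)⁻¹ * 0)) :=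
        (continuous_const.mul continuous_id).tendsto 0
      rw [mul_zero] at h0
      exact h0.mono_left nhdsWithin_le_nhds
    have h1 := (ENNReal.continuous_ofReal.tendsto _).comp hreal
    have h2 := ((ENNReal.continuous_rpow_const (y := 1 - 1/p.toReal)).tendsto _).comp h1
    simp only [Function.comp_def, ENNReal.ofReal_zero] at h2
    rw [ENNReal.zero_rpow_of_pos hαpos] at h2
    have h3 := ENNReal.Tendsto.mul_const h2 (b := (νc Set.univ) ^ (1/p.toReal))
      (Or.inr (ENNReal.rpow_ne_top_of_nonneg (by positivity) (measure_ne_top νc Set.univ)))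
    rw [zero_mul] at h3
    have h4 := h3.const_add (νa Set.univ)
    rw [add_zero] at h4
    exact h4
  refine ge_of_tendsto htend ?_
  filter_upwards [eventually_mem_nhdsWithin] with ε hε
  exact main ε hε
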